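/- Let β ∈ (−π/2, π/2), 0 < α₀ ≤ (π/2 − β)/2, α ∈ (0, α₀). For u ≥ 1 let q(u) := (u − sin(β−α))/(u − sin(β+α)). Then log q(u) ≥ ((1 − sin(β+α))/(u − sin(β+α))) · log q(1) for all u ≥ 1. -/

import Mathlib

open Real

lemma aux_g_mono (c : ℝ) (hc : 0 < c) :
    MonotoneOn (fun t : ℝ => t * (Real.log (t + c) - Real.log t)) (Set.Ioi 0) := by
  have hderiv : ∀ t ∈ Set.Ioi (0:ℝ),
      HasDerivAt (fun t : ℝ => t * (Real.log (t + c) - Real.log t))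
        ((Real.log (t + c) - Real.log t) + t * (1/(t+c) - 1/t)) t := by
    intro t ht
    have ht : (0:ℝ) < t := ht
    have htc : (0:ℝ) < t + c := by linarith
    have h1 : HasDerivAt (fun t : ℝ => Real.log (t + c)) (1/(t+c)) t := by
      have := (Real.hasDerivAt_log htc.ne').comp t ((hasDerivAt_id t).add_const c)
      simpa [one_div, Function.comp_def] using this
    have h2 : HasDerivAt Real.log (1/t) t := by
      simpa [one_div] using Real.hasDerivAt_log ht.ne'
    have := (hasDerivAt_id t).mul (h1.sub h2)
    simpa [Pi.mul_def, Pi.sub_def] using this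
  have hdiff : DifferentiableOn ℝ (fun t : ℝ => t * (Real.log (t + c) - Real.log t))
      (Set.Ioi 0) := fun t ht => ((hderiv t ht).differentiableAt).differentiableWithinAt
  apply monotoneOn_of_deriv_nonneg (convex_Ioi 0) hdiff.continuousOn
  · rwa [interior_Ioi]
  · intro t ht
    rw [interior_Ioi] at ht
    have ht : (0:ℝ) < t := ht
    have htc : (0:ℝ) < t + c := by linarith
    rw [(hderiv t ht).deriv]
    have hlog : Real.log (t/(t+c)) ≤ t/(t+c) - 1 :=
      Real.log_le_sub_one_of_pos (by positivity)
    rw [Real.log_div ht.ne' htc.ne'] at hlog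
    have h1 : t * (1/(t+c) - 1/t) = t/(t+c) - 1 := by
      field_simp
    rw [h1]
    linarith

theorem stmt4 (β α₀ α : ℝ)
    (hβ : β ∈ Set.Ioo (-(π/2)) (π/2))
    (hα₀ : 0 < α₀) (hα₀' : α₀ ≤ (π/2 - β)/2)
    (hα : α ∈ Set.Ioo 0 α₀)
    (q : ℝ → ℝ) (hq : ∀ u, q u = (u - Real.sin (β - α)) / (u - Real.sin (β + α))) :
    ∀ u : ℝ, 1 ≤ u →
      ((1 - Real.sin (β + α)) / (u - Real.sin (β + α))) * Real.log (q 1) ≤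
        Real.log (q u) := by
  obtain ⟨hβ1, hβ2⟩ := hβ
  obtain ⟨hα1, hα2⟩ := hα
  set a := Real.sin (β - α) with ha
  set b := Real.sin (β + α) with hb
  have hβα1 : -(π/2) < β + α := by linarith
  have hβα2 : β + α < π/2 := by linarith
  have hb1 : b < 1 := by
    have := Real.strictMonoOn_sin
      (Set.mem_Icc.mpr ⟨le_of_lt hβα1, le_of_lt hβα2⟩)
      (Set.mem_Icc.mpr ⟨by linarith [Real.pi_pos], le_refl _⟩) hβα2
    simpa [Real.sin_pi_div_two] using this
  have hcosβ : 0 < Real.cos β := Real.cos_pos_of_mem_Ioo ⟨hβ1, hβ2⟩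
  have hsinα : 0 < Real.sin α := Real.sin_pos_of_pos_of_lt_pi hα1
    (by nlinarith [Real.pi_pos])
  have hab : b - a = 2 * Real.sin α * Real.cos β := by
    rw [ha, hb, Real.sin_sub_sin]; ring_nf
  set c := b - a with hc
  have hc0 : 0 < c := by rw [hab]; positivity
  intro u hu
  have hub : 0 < u - b := by linarith
  have h1b : 0 < 1 - b := by linarith
  have hua : u - a = (u - b) + c := by ring
  have h1a : 1 - a = (1 - b) + c := by ring
  have hmono := aux_g_mono c hc0 (Set.mem_Ioi.mpr h1b) (Set.mem_Ioi.mpr hub)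
    (by linarith : (1:ℝ) - b ≤ u - b)
  simp only at hmono
  rw [hq u, hq 1,
    Real.log_div (by linarith : u - a ≠ 0) hub.ne',
    Real.log_div (by linarith : (1:ℝ) - a ≠ 0) h1b.ne']
  rw [div_mul_eq_mul_div, div_le_iff₀ hub]
  calc (1 - b) * (Real.log (1 - a) - Real.log (1 - b))
      = (1 - b) * (Real.log ((1 - b) + c) - Real.log (1 - b)) := by rw [← h1a]
    _ ≤ (u - b) * (Real.log ((u - b) + c) - Real.log (u - b)) := hmono
    _ = (Real.log (u - a) - Real.log (u - b)) * (u - b) := by rw [← hua]; ring
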